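/- Let T be a power-bounded operator on a complex Banach space E, let U be a free ultrafilter on ℕ, and suppose ((T^U)^n)_{n∈ℕ} converges strongly to 0 on the ultrapower E^U. Then the spectral radius of T is strictly less than 1, and consequently ‖T^n‖ → 0. -/

import Mathlib

open Filter Topology

private theorem aux_core_spec_lt_one {E : Type*} [NormedAddCommGroup E] [NormedSpace ℂ E] [CompleteSpace E]
    [Nontrivial E] (T : E →L[ℂ] E) {M' : ℝ} (hM'1 : 1 ≤ M')
    (hM : ∀ n : ℕ, ‖(T ^ n : E →L[ℂ] E)‖ ≤ M')
    (U : Ultrafilter ℕ) (hU : (U : Filter ℕ) ≤ cofinite)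
    (hultra : ∀ f : ℕ → E, (∃ C : ℝ, ∀ k, ‖f k‖ ≤ C) →
      ∀ ε > (0 : ℝ), ∃ N : ℕ, ∀ n ≥ N,
        {k : ℕ | ‖(T ^ n) (f k)‖ ≤ ε} ∈ U) :
    ∀ z ∈ spectrum ℂ T, ‖z‖₊ < 1 := by
  have hM'0 : (0:ℝ) < M' := lt_of_lt_of_le one_pos hM'1
  -- all spectrum points have norm ≤ 1
  have hle : ∀ z ∈ spectrum ℂ T, ‖z‖ ≤ 1 := by
    intro z hz
    by_contra hlt
    push_neg at hlt
    obtain ⟨n, hn⟩ := pow_unbounded_of_one_lt (M' : ℝ) hlt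
    have hzn : z ^ n ∈ spectrum ℂ (T ^ n) := by
      rw [spectrum.map_pow]; exact ⟨z, hz, rfl⟩
    have := spectrum.norm_le_norm_of_mem hzn
    rw [norm_pow] at this
    exact absurd (this.trans (hM n)) (not_le.mpr hn)
  intro z hz
  by_contra hge
  push_neg at hge
  have hz1 : ‖z‖ = 1 := le_antisymm (hle z hz) (by exact_mod_cast hge)
  -- the scaled points are in the resolvent set
  set μ : ℕ → ℂ := fun j => ((1 + ((j:ℝ)+1)⁻¹ : ℝ) : ℂ) * z with hμ
  have hμnorm : ∀ j, ‖μ j‖ = 1 + ((j:ℝ)+1)⁻¹ := by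
    intro j
    have h0 : (0:ℝ) < ((j:ℝ)+1)⁻¹ := by positivity
    rw [hμ]
    simp only [norm_mul, hz1, mul_one, Complex.norm_real, Real.norm_eq_abs]
    rw [abs_of_pos (by linarith)]
  have hμz : ∀ j, ‖μ j - z‖ = ((j:ℝ)+1)⁻¹ := by
    intro j
    have h0 : (0:ℝ) < ((j:ℝ)+1)⁻¹ := by positivity
    have : μ j - z = ((((j:ℝ)+1)⁻¹ : ℝ) : ℂ) * z := by rw [hμ]; push_cast; ring
    rw [this]
    simp only [norm_mul, hz1, mul_one, Complex.norm_real, Real.norm_eq_abs]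
    rw [abs_of_pos h0]
  have hres : ∀ j, IsUnit (algebraMap ℂ (E →L[ℂ] E) (μ j) - T) := by
    intro j
    rw [← spectrum.notMem_iff]
    intro hmem
    have h1 := hle _ hmem
    have h0 : (0:ℝ) < ((j:ℝ)+1)⁻¹ := by positivity
    rw [hμnorm j] at h1
    linarith
  -- the resolvents blow up in norm
  set u : ℕ → (E →L[ℂ] E)ˣ := fun j => (hres j).unit with hu
  set R : ℕ → (E →L[ℂ] E) := fun j => (((u j)⁻¹ : (E →L[ℂ] E)ˣ) : E →L[ℂ] E) with hR
  have huval : ∀ j, ((u j : (E →L[ℂ] E)ˣ) : E →L[ℂ] E) = algebraMap ℂ (E →L[ℂ] E) (μ j) - T :=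
    fun j => (hres j).unit_spec
  have hRnorm : ∀ j : ℕ, (j:ℝ) + 1 ≤ ‖R j‖ := by
    intro j
    by_contra hlt
    push_neg at hlt
    have hRpos : 0 < ‖R j‖ := Units.norm_pos _
    have hnear : ‖(algebraMap ℂ (E →L[ℂ] E) z - T) - (u j : E →L[ℂ] E)‖
        < ‖(((u j)⁻¹ : (E →L[ℂ] E)ˣ) : E →L[ℂ] E)‖⁻¹ := by
      rw [huval j]
      have heq : algebraMap ℂ (E →L[ℂ] E) z - T - (algebraMap ℂ (E →L[ℂ] E) (μ j) - T)
          = algebraMap ℂ (E →L[ℂ] E) (z - μ j) := by rw [map_sub]; abel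
      rw [heq, norm_algebraMap', norm_sub_rev, hμz j]
      have h0 : (0:ℝ) < ((j:ℝ)+1) := by positivity
      have h6 := one_div_lt_one_div_of_lt hRpos hlt
      rw [one_div, one_div] at h6
      exact h6
    exact spectrum.notMem_iff.mpr ((u j).ofNearby _ hnear).isUnit hz
  -- approximate eigenvectors
  have hvec : ∀ j : ℕ, ∃ x : E, ‖x‖ = 1 ∧ ‖T x - z • x‖ ≤ 3 / ((j:ℝ)+1) := by
    intro j
    have h0 : (0:ℝ) < ((j:ℝ)+1) := by positivity
    have hhalf : ((j:ℝ)+1)/2 < ‖R j‖ := lt_of_lt_of_le (by linarith) (hRnorm j)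
    obtain ⟨y, hy1, hy2⟩ := (R j).exists_lt_apply_of_lt_opNorm hhalf
    set v : E := R j y with hv
    have hvpos : 0 < ‖v‖ := lt_trans (by positivity) hy2
    set c : ℂ := ((‖v‖ : ℝ) : ℂ)⁻¹ with hc
    have hcnorm : ‖c‖ = ‖v‖⁻¹ := by
      rw [hc, norm_inv, Complex.norm_real, Real.norm_eq_abs, abs_of_pos hvpos]
    refine ⟨c • v, ?_, ?_⟩
    · rw [norm_smul, hcnorm, inv_mul_cancel₀ hvpos.ne']
    · have h2 : (algebraMap ℂ (E →L[ℂ] E) (μ j) - T) v = y := by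
        have h1 := congrArg (fun A : E →L[ℂ] E => A y) (Units.mul_inv (u j))
        simp only [ContinuousLinearMap.mul_apply, ContinuousLinearMap.one_apply] at h1
        rw [huval j] at h1
        exact h1
      have h3 : T v = μ j • v - y := by
        rw [ContinuousLinearMap.sub_apply, Algebra.algebraMap_eq_smul_one,
          ContinuousLinearMap.smul_apply, ContinuousLinearMap.one_apply] at h2
        linear_combination (norm := module) -h2
      have h4 : T (c • v) - z • (c • v) = c • ((μ j - z) • v) - c • y := by
        rw [map_smul, h3]
        module
      rw [h4]
      have h5 : ‖v‖⁻¹ ≤ 2 / ((j:ℝ)+1) := by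
        rw [inv_le_comm₀ hvpos (by positivity), inv_div]
        exact hy2.le
      calc ‖c • ((μ j - z) • v) - c • y‖
          ≤ ‖c • ((μ j - z) • v)‖ + ‖c • y‖ := norm_sub_le _ _
        _ = ‖v‖⁻¹ * (‖μ j - z‖ * ‖v‖) + ‖v‖⁻¹ * ‖y‖ := by
            rw [norm_smul, norm_smul, norm_smul, hcnorm]
        _ = ((j:ℝ)+1)⁻¹ + ‖v‖⁻¹ * ‖y‖ := by
            rw [hμz j, show ‖v‖⁻¹ * (((j:ℝ)+1)⁻¹ * ‖v‖) = ((j:ℝ)+1)⁻¹ * (‖v‖⁻¹ * ‖v‖) by ring,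
              inv_mul_cancel₀ hvpos.ne', mul_one]
        _ ≤ ((j:ℝ)+1)⁻¹ + 2/((j:ℝ)+1) * 1 :=
            add_le_add le_rfl (mul_le_mul h5 hy1.le (norm_nonneg _) (by positivity))
        _ = 3 / ((j:ℝ)+1) := by
            rw [mul_one, inv_eq_one_div, ← add_div]
            norm_num
  -- approximate eigenvectors chosen
  choose x hx1 hx2 using hvec
  -- power growth estimate
  have key : ∀ (w : E) (n : ℕ), ‖(T ^ n) w - z ^ n • w‖ ≤ n * M' * ‖T w - z • w‖ := by
    intro w n
    induction n with
    | zero => simp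
    | succ n ih =>
      have e1 : (T ^ (n+1)) w = (T ^ n) (T w) := by
        rw [pow_succ, ContinuousLinearMap.mul_apply]
      have hsplit : (T ^ (n+1)) w - z ^ (n+1) • w
          = (T ^ n) (T w - z • w) + z • ((T ^ n) w - z ^ n • w) := by
        rw [map_sub, map_smul, e1, pow_succ]
        module
      rw [hsplit]
      have hb1 : ‖(T ^ n) (T w - z • w)‖ ≤ M' * ‖T w - z • w‖ :=
        ((T ^ n).le_opNorm _).trans (mul_le_mul_of_nonneg_right (hM n) (norm_nonneg _))
      have hb2 : ‖z • ((T ^ n) w - z ^ n • w)‖ ≤ n * M' * ‖T w - z • w‖ := by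
        rw [norm_smul, hz1, one_mul]; exact ih
      calc ‖(T ^ n) (T w - z • w) + z • ((T ^ n) w - z ^ n • w)‖
          ≤ ‖(T ^ n) (T w - z • w)‖ + ‖z • ((T ^ n) w - z ^ n • w)‖ := norm_add_le _ _
        _ ≤ M' * ‖T w - z • w‖ + n * M' * ‖T w - z • w‖ := add_le_add hb1 hb2
        _ = ((n+1 : ℕ) : ℝ) * M' * ‖T w - z • w‖ := by push_cast; ring
  obtain ⟨N, hN⟩ := hultra x ⟨1, fun k => (hx1 k).le⟩ (1/2) (by norm_num)
  have hS : {k : ℕ | ‖(T ^ N) (x k)‖ ≤ 1/2} ∈ U := hN N le_rfl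
  have hsub : {k : ℕ | ‖(T ^ N) (x k)‖ ≤ 1/2} ⊆ {k : ℕ | (k : ℝ) ≤ 6 * N * M'} := by
    intro k hk
    simp only [Set.mem_setOf_eq] at hk ⊢
    have hkpos : (0:ℝ) < (k:ℝ) + 1 := by positivity
    have h1 : ‖z ^ N • x k‖ = 1 := by
      rw [norm_smul, norm_pow, hz1, one_pow, hx1 k, one_mul]
    have h2 : ‖(T ^ N) (x k) - z ^ N • x k‖ ≤ (N:ℝ) * M' * (3 / ((k:ℝ)+1)) :=
      (key (x k) N).trans (mul_le_mul_of_nonneg_left (hx2 k) (by positivity))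
    have h3 : (1:ℝ) ≤ ‖(T ^ N) (x k)‖ + ‖(T ^ N) (x k) - z ^ N • x k‖ := by
      calc (1:ℝ) = ‖z ^ N • x k‖ := h1.symm
        _ = ‖(T ^ N) (x k) - ((T ^ N) (x k) - z ^ N • x k)‖ := by rw [sub_sub_cancel]
        _ ≤ _ := norm_sub_le _ _
    have h4 : (1:ℝ)/2 ≤ (N:ℝ) * M' * (3/((k:ℝ)+1)) := by linarith
    rw [mul_div_assoc'] at h4
    have h5 : (1/2 : ℝ) * ((k:ℝ)+1) ≤ (N:ℝ) * M' * 3 := by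
      have := (le_div_iff₀ hkpos).mp h4
      linarith
    linarith
  have hfin : {k : ℕ | (k:ℝ) ≤ 6*(N:ℝ)*M'}.Finite :=
    (Set.finite_Iic (⌊(6*(N:ℝ)*M' : ℝ)⌋₊)).subset fun k hk => Nat.le_floor hk
  have hSc : ({k : ℕ | ‖(T ^ N) (x k)‖ ≤ 1/2} : Set ℕ)ᶜ ∈ U := hU (by
    rw [mem_cofinite, compl_compl]
    exact hfin.subset hsub)
  exact absurd hSc (Filter.compl_notMem hS)

private theorem aux_norm_pow_tendsto {E : Type*} [NormedAddCommGroup E] [NormedSpace ℂ E] [CompleteSpace E]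
    [Nontrivial E] (T : E →L[ℂ] E) (hr : spectralRadius ℂ T < 1) :
    Tendsto (fun n : ℕ => ‖(T ^ n : E →L[ℂ] E)‖) atTop (𝓝 0) := by
  obtain ⟨r', hrr', hr'1⟩ := exists_between hr
  lift r' to NNReal using ne_top_of_lt hr'1
  have hgel := spectrum.pow_nnnorm_pow_one_div_tendsto_nhds_spectralRadius T
  have hev : ∀ᶠ n : ℕ in atTop, (‖T ^ n‖₊ : ENNReal) ^ (1 / (n : ℝ)) < (r' : ENNReal) :=
    hgel.eventually_lt_const hrr'
  have hev2 : ∀ᶠ n : ℕ in atTop, ‖(T ^ n : E →L[ℂ] E)‖ ≤ (r' : ℝ) ^ n := by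
    filter_upwards [hev, eventually_ge_atTop 1] with n h1 h2
    have hn : (0 : ℝ) < n := by positivity
    have h3 := ENNReal.rpow_lt_rpow h1 hn
    rw [← ENNReal.rpow_mul, one_div, inv_mul_cancel₀ hn.ne', ENNReal.rpow_one,
      ENNReal.rpow_natCast, ← ENNReal.coe_pow, ENNReal.coe_lt_coe] at h3
    calc ‖(T ^ n : E →L[ℂ] E)‖ = ((‖T ^ n‖₊ : NNReal) : ℝ) := rfl
      _ ≤ ((r' ^ n : NNReal) : ℝ) := by exact_mod_cast h3.le
      _ = (r' : ℝ) ^ n := by push_cast; ring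
  have hpow : Tendsto (fun n : ℕ => (r' : ℝ) ^ n) atTop (𝓝 0) :=
    tendsto_pow_atTop_nhds_zero_of_lt_one r'.coe_nonneg
      (by exact_mod_cast ENNReal.coe_lt_one_iff.mp hr'1)
  exact squeeze_zero' (Eventually.of_forall fun n => norm_nonneg _) hev2 hpow

/-- Let `T` be a power-bounded operator on a complex Banach space, let `U` be a free
ultrafilter on `ℕ`, and suppose the lifted powers `(T^𝒰)^n` converge strongly to `0` on
the ultrapower `E^𝒰` (expressed via representatives: for every bounded sequence `f` in
`E`, the ultrafilter limits of `‖T^n (f k)‖` tend to `0` as `n → ∞`).  Then the spectral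
radius of `T` is strictly less than `1`, and consequently `‖T^n‖ → 0`. -/
theorem spectralRadius_lt_one_of_ultrapower_strong_convergence
    {E : Type*} [NormedAddCommGroup E] [NormedSpace ℂ E] [CompleteSpace E]
    (T : E →L[ℂ] E) (hpb : ∃ M : ℝ, ∀ n : ℕ, ‖T ^ n‖ ≤ M)
    (U : Ultrafilter ℕ) (hU : (U : Filter ℕ) ≤ cofinite)
    (hultra : ∀ f : ℕ → E, (∃ C : ℝ, ∀ k, ‖f k‖ ≤ C) →
      ∀ ε > (0 : ℝ), ∃ N : ℕ, ∀ n ≥ N,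
        {k : ℕ | ‖(T ^ n) (f k)‖ ≤ ε} ∈ U) :
    spectralRadius ℂ T < 1 ∧
      Tendsto (fun n : ℕ => ‖(T ^ n : E →L[ℂ] E)‖) atTop (𝓝 0) := by
  rcases subsingleton_or_nontrivial E with hE | hE
  · constructor
    · rw [spectrum.SpectralRadius.of_subsingleton]
      exact zero_lt_one
    · have h0 : ∀ n : ℕ, ‖(T ^ n : E →L[ℂ] E)‖ = 0 := fun n => by
        rw [Subsingleton.elim (T ^ n) (0 : E →L[ℂ] E), norm_zero]
      simp only [h0]
      exact tendsto_const_nhds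
  · obtain ⟨M, hM⟩ := hpb
    have hM' : ∀ n : ℕ, ‖(T ^ n : E →L[ℂ] E)‖ ≤ max M 1 :=
      fun n => (hM n).trans (le_max_left _ _)
    have hlt := aux_core_spec_lt_one T (le_max_right M 1) hM' U hU hultra
    have hr : spectralRadius ℂ T < 1 := by
      have h := spectrum.spectralRadius_lt_of_forall_lt (a := T) (r := 1) hlt
      simpa using h
    exact ⟨hr, aux_norm_pow_tendsto T hr⟩
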